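/- arXiv:2206.01165 — 10 statements merged into one kernel-verified Lean document; each statement's English description precedes it below -/
import Mathlib

section
/- In the inclusive setup with a single bath, the reinitialization entropy production equals the mutual information between the system of interest and the bath at the final time plus the Kullback–Leibler divergence of the final bath marginal from the initial bath distribution: σ̄ = I(U;V)_{P_τ} + D(ρ_τ ‖ ρ₀), where I(U;V)_{P_τ} := H(p_τ) + H(ρ_τ) − H(P_τ) is the mutual information of the two coordinates under P_τ. -/
open scoped BigOperators

/-- Shannon entropy (natural log) of a distribution on a finite type. -/
noncomputable def shannonH {U : Type*} [Fintype U] (p : U → ℝ) : ℝ :=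
  -∑ u, p u * Real.log (p u)

/-- Kullback–Leibler divergence between two distributions on a finite type. -/
noncomputable def klDiv {U : Type*} [Fintype U] (p q : U → ℝ) : ℝ :=
  ∑ u, p u * Real.log (p u / q u)

/-- In the inclusive setup with a single bath, the reinitialization entropy
production equals the mutual information between the SOI and the bath at the
final time plus the KL divergence of the final bath marginal from the initial
bath distribution: σ̄ = I(U;V)_{P_τ} + D(ρ_τ ‖ ρ₀). -/
theorem rep_eq_mutualInfo_add_klDiv
    {U V : Type*} [Fintype U] [Fintype V]
    (p0 : U → ℝ) (ρ0 : V → ℝ)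
    (hp0 : ∀ u, 0 ≤ p0 u) (hp0sum : ∑ u, p0 u = 1)
    (hρ0 : ∀ v, 0 < ρ0 v) (hρ0sum : ∑ v, ρ0 v = 1)
    (F : U × V ≃ U × V)
    (Pτ : U × V → ℝ)
    (hPτ : ∀ x, Pτ x = p0 (F.symm x).1 * ρ0 (F.symm x).2)
    (pτ : U → ℝ) (hpτ : ∀ u, pτ u = ∑ v, Pτ (u, v))
    (ρτ : V → ℝ) (hρτ : ∀ v, ρτ v = ∑ u, Pτ (u, v))
    (B : V → ℝ) (hB : ∀ v, B v = -Real.log (ρ0 v))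
    (Qbar : ℝ) (hQbar : Qbar = ∑ v, ρ0 v * B v - ∑ v, ρτ v * B v)
    (σbar : ℝ) (hσbar : σbar = (shannonH pτ - shannonH p0) - Qbar) :
    σbar = (shannonH pτ + shannonH ρτ - shannonH Pτ) + klDiv ρτ ρ0 := by
  -- (1) H(Pτ) = H(p0) + H(ρ0)
  have hHP : shannonH Pτ = shannonH p0 + shannonH ρ0 := by
    have hre : ∑ x, Pτ x * Real.log (Pτ x)
        = ∑ x : U × V, p0 x.1 * ρ0 x.2 * Real.log (p0 x.1 * ρ0 x.2) := by
      calc ∑ x, Pτ x * Real.log (Pτ x)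
          = ∑ x : U × V, (fun y : U × V => p0 y.1 * ρ0 y.2 * Real.log (p0 y.1 * ρ0 y.2))
              (F.symm x) := by
            apply Finset.sum_congr rfl
            intro x _
            simp [hPτ x]
        _ = ∑ x : U × V, p0 x.1 * ρ0 x.2 * Real.log (p0 x.1 * ρ0 x.2) :=
            Equiv.sum_comp F.symm (fun y : U × V => p0 y.1 * ρ0 y.2 * Real.log (p0 y.1 * ρ0 y.2))
    have key : ∀ (u : U) (v : V), p0 u * ρ0 v * Real.log (p0 u * ρ0 v)
        = ρ0 v * (p0 u * Real.log (p0 u)) + p0 u * (ρ0 v * Real.log (ρ0 v)) := by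
      intro u v
      by_cases h : p0 u = 0
      · simp [h]
      · rw [Real.log_mul h (hρ0 v).ne']
        ring
    simp only [shannonH, hre, Fintype.sum_prod_type]
    have : ∑ u, ∑ v, p0 u * ρ0 v * Real.log (p0 u * ρ0 v)
        = ∑ u, ∑ v, (ρ0 v * (p0 u * Real.log (p0 u)) + p0 u * (ρ0 v * Real.log (ρ0 v))) := by
      apply Finset.sum_congr rfl; intro u _
      apply Finset.sum_congr rfl; intro v _
      exact key u v
    rw [this]
    have h2 : ∑ u, ∑ v, (ρ0 v * (p0 u * Real.log (p0 u)) + p0 u * (ρ0 v * Real.log (ρ0 v)))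
        = (∑ u, p0 u * Real.log (p0 u)) + (∑ v, ρ0 v * Real.log (ρ0 v)) := by
      have h3 : ∀ u : U, ∑ v, (ρ0 v * (p0 u * Real.log (p0 u)) + p0 u * (ρ0 v * Real.log (ρ0 v)))
          = p0 u * Real.log (p0 u) + p0 u * ∑ v, ρ0 v * Real.log (ρ0 v) := by
        intro u
        rw [Finset.sum_add_distrib, ← Finset.sum_mul, ← Finset.mul_sum, hρ0sum, one_mul]
      rw [Finset.sum_congr rfl (fun u _ => h3 u), Finset.sum_add_distrib,
        ← Finset.sum_mul, hp0sum, one_mul]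
    rw [h2]; ring
  -- (2) ∑ ρ0 B = H(ρ0)
  have h2 : ∑ v, ρ0 v * B v = shannonH ρ0 := by
    simp only [shannonH, hB, ← Finset.sum_neg_distrib]
    apply Finset.sum_congr rfl; intro v _; ring
  -- (3) klDiv ρτ ρ0 = -H(ρτ) + ∑ ρτ B
  have h3 : klDiv ρτ ρ0 = -shannonH ρτ + ∑ v, ρτ v * B v := by
    simp only [klDiv, shannonH, neg_neg, ← Finset.sum_add_distrib]
    apply Finset.sum_congr rfl; intro v _
    by_cases h : ρτ v = 0
    · simp [h]
    · rw [Real.log_div h (hρ0 v).ne', hB]; ring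
  rw [hσbar, hQbar, hHP, h2, h3]
  ring
end

section
/- In the inclusive setup with N independent baths, the reinitialization entropy production equals the multi-information among the system of interest and all baths at the final time plus the sum of the Kullback–Leibler divergences of each final bath marginal from its initial distribution: σ̄ = [H(p_τ) + Σ_{i=1}^N H(ρ_τ^i) − H(P_τ)] + Σ_{i=1}^N D(ρ_τ^i ‖ ρ₀^i). -/
open scoped BigOperators

attribute [local instance] Classical.propDecidable

private lemma sum_pi_prod {N : ℕ} {V : Fin N → Type*} [∀ i, Fintype (V i)]
    (f : ∀ i, V i → ℝ) :
    ∑ vs : ∀ i, V i, ∏ i, f i (vs i) = ∏ i, ∑ v, f i v := by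
  rw [Finset.prod_univ_sum, Fintype.piFinset_univ]

private lemma sum_pi_prod_log {N : ℕ} {V : Fin N → Type*} [∀ i, Fintype (V i)]
    (ρ0 : ∀ i, V i → ℝ) (hρ0sum : ∀ i, ∑ v, ρ0 i v = 1) (i : Fin N) :
    ∑ vs : ∀ j, V j, (∏ j, ρ0 j (vs j)) * Real.log (ρ0 i (vs i))
      = ∑ v, ρ0 i v * Real.log (ρ0 i v) := by
  classical
  set g : ∀ j, V j → ℝ := fun j v => if j = i then ρ0 j v * Real.log (ρ0 j v) else ρ0 j v
    with hg
  have hprod : ∀ vs : ∀ j, V j,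
      (∏ j, ρ0 j (vs j)) * Real.log (ρ0 i (vs i)) = ∏ j, g j (vs j) := by
    intro vs
    rw [← Finset.mul_prod_erase Finset.univ (fun j => g j (vs j)) (Finset.mem_univ i),
        ← Finset.mul_prod_erase Finset.univ (fun j => ρ0 j (vs j)) (Finset.mem_univ i)]
    have h1 : g i (vs i) = ρ0 i (vs i) * Real.log (ρ0 i (vs i)) := by simp [hg]
    have h2 : ∏ j ∈ Finset.univ.erase i, g j (vs j)
        = ∏ j ∈ Finset.univ.erase i, ρ0 j (vs j) := by
      apply Finset.prod_congr rfl
      intro j hj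
      simp [hg, (Finset.mem_erase.mp hj).1]
    rw [h1, h2]; ring
  calc ∑ vs : ∀ j, V j, (∏ j, ρ0 j (vs j)) * Real.log (ρ0 i (vs i))
      = ∑ vs : ∀ j, V j, ∏ j, g j (vs j) :=
        Finset.sum_congr rfl fun vs _ => hprod vs
    _ = ∏ j, ∑ v, g j v := sum_pi_prod g
    _ = ∑ v, ρ0 i v * Real.log (ρ0 i v) := by
        rw [Fintype.prod_eq_single i]
        · simp [hg]
        · intro j hj
          simp [hg, hj, hρ0sum j]

/-- In the inclusive setup with N independent baths, the reinitialization entropy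
production equals the multi-information among the SOI and all baths at the final
time plus the sum of the KL divergences of each final bath marginal from its
initial distribution. -/
theorem rep_eq_multiInfo_add_sum_klDiv
    {N : ℕ} {U : Type*} [Fintype U] {V : Fin N → Type*} [∀ i, Fintype (V i)]
    (p0 : U → ℝ) (ρ0 : ∀ i, V i → ℝ)
    (hp0 : ∀ u, 0 ≤ p0 u) (hp0sum : ∑ u, p0 u = 1)
    (hρ0 : ∀ i v, 0 < ρ0 i v) (hρ0sum : ∀ i, ∑ v, ρ0 i v = 1)
    (F : (U × (∀ i, V i)) ≃ (U × (∀ i, V i)))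
    (Pτ : U × (∀ i, V i) → ℝ)
    (hPτ : ∀ x, Pτ x = p0 (F.symm x).1 * ∏ i, ρ0 i ((F.symm x).2 i))
    (pτ : U → ℝ) (hpτ : ∀ u, pτ u = ∑ vs : ∀ i, V i, Pτ (u, vs))
    (ρτ : ∀ i, V i → ℝ)
    (hρτ : ∀ i v, ρτ i v = ∑ x : U × (∀ j, V j), if x.2 i = v then Pτ x else 0)
    (B : ∀ i, V i → ℝ) (hB : ∀ i v, B i v = -Real.log (ρ0 i v))
    (Qbar : ℝ)
    (hQbar : Qbar = ∑ i, ((∑ v, ρ0 i v * B i v) - ∑ v, ρτ i v * B i v))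
    (σbar : ℝ) (hσbar : σbar = (shannonH pτ - shannonH p0) - Qbar) :
    σbar = (shannonH pτ + (∑ i, shannonH (ρτ i)) - shannonH Pτ)
      + ∑ i, klDiv (ρτ i) (ρ0 i) := by
  classical
  set P0 : U × (∀ i, V i) → ℝ := fun x => p0 x.1 * ∏ i, ρ0 i (x.2 i) with hP0
  -- Key claim: shannonH Pτ = shannonH p0 + ∑ i, shannonH (ρ0 i)
  have hHPτ : shannonH Pτ = shannonH p0 + ∑ i, shannonH (ρ0 i) := by
    have h1 : ∑ x, Pτ x * Real.log (Pτ x) = ∑ x, P0 x * Real.log (P0 x) := by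
      have hx : ∀ x, Pτ x = P0 (F.symm x) := fun x => hPτ x
      simp only [hx]
      exact Equiv.sum_comp F.symm (fun y => P0 y * Real.log (P0 y))
    have h2 : ∑ x, P0 x * Real.log (P0 x)
        = (∑ u, p0 u * Real.log (p0 u)) + ∑ i, ∑ v, ρ0 i v * Real.log (ρ0 i v) := by
      rw [Fintype.sum_prod_type]
      have hpt : ∀ (u : U) (vs : ∀ i, V i),
          P0 (u, vs) * Real.log (P0 (u, vs))
          = p0 u * Real.log (p0 u) * ∏ i, ρ0 i (vs i)
            + p0 u * ∑ i, (∏ j, ρ0 j (vs j)) * Real.log (ρ0 i (vs i)) := by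
        intro u vs
        have hW : (0:ℝ) < ∏ i, ρ0 i (vs i) :=
          Finset.prod_pos fun i _ => hρ0 i (vs i)
        by_cases hu : p0 u = 0
        · simp [hP0, hu]
        · have hlog : Real.log (p0 u * ∏ i, ρ0 i (vs i))
              = Real.log (p0 u) + ∑ i, Real.log (ρ0 i (vs i)) := by
            rw [Real.log_mul hu hW.ne', Real.log_prod]
            intro i _
            exact (hρ0 i (vs i)).ne'
          simp only [hP0]
          rw [hlog, ← Finset.mul_sum]
          ring
      have hW1 : ∑ vs : ∀ i, V i, ∏ i, ρ0 i (vs i) = 1 := by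
        rw [sum_pi_prod]
        simp [hρ0sum]
      have hS : ∑ vs : ∀ j, V j, ∑ i, (∏ j, ρ0 j (vs j)) * Real.log (ρ0 i (vs i))
          = ∑ i, ∑ v, ρ0 i v * Real.log (ρ0 i v) := by
        rw [Finset.sum_comm]
        exact Finset.sum_congr rfl fun i _ => sum_pi_prod_log ρ0 hρ0sum i
      calc ∑ u, ∑ vs : ∀ i, V i, P0 (u, vs) * Real.log (P0 (u, vs))
          = ∑ u, (p0 u * Real.log (p0 u) * ∑ vs : ∀ i, V i, (∏ i, ρ0 i (vs i))
              + p0 u * ∑ vs : ∀ j, V j,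
                  ∑ i, (∏ j, ρ0 j (vs j)) * Real.log (ρ0 i (vs i))) := by
            refine Finset.sum_congr rfl fun u _ => ?_
            rw [Finset.mul_sum, Finset.mul_sum, ← Finset.sum_add_distrib]
            exact Finset.sum_congr rfl fun vs _ => hpt u vs
        _ = (∑ u, p0 u * Real.log (p0 u)) + ∑ i, ∑ v, ρ0 i v * Real.log (ρ0 i v) := by
            simp only [hW1, hS, mul_one]
            rw [Finset.sum_add_distrib, ← Finset.sum_mul, hp0sum, one_mul]
    simp only [shannonH]
    rw [h1, h2, neg_add]
    congr 1 <;> exact (Finset.sum_neg_distrib _).symm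
  -- KL divergences
  have hkl : ∀ i, klDiv (ρτ i) (ρ0 i)
      = -shannonH (ρτ i) - ∑ v, ρτ i v * Real.log (ρ0 i v) := by
    intro i
    simp only [klDiv, shannonH, neg_neg]
    rw [← Finset.sum_sub_distrib]
    refine Finset.sum_congr rfl fun v _ => ?_
    by_cases h : ρτ i v = 0
    · simp [h]
    · rw [Real.log_div h (hρ0 i v).ne']; ring
  -- heat term
  have hQ : Qbar = ∑ i, (shannonH (ρ0 i) + ∑ v, ρτ i v * Real.log (ρ0 i v)) := by
    rw [hQbar]
    refine Finset.sum_congr rfl fun i _ => ?_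
    simp only [hB, shannonH, mul_neg]
    rw [Finset.sum_neg_distrib, Finset.sum_neg_distrib]
    ring
  rw [hσbar, hQ, hHPτ]
  simp only [hkl]
  rw [Finset.sum_add_distrib, Finset.sum_sub_distrib, Finset.sum_neg_distrib]
  ring
end

section
/- In the inclusive setup with a single bath, the reinitialization entropy production is nonnegative: σ̄ ≥ 0, i.e., the minimal work expended to reinitialize the system of interest is at least the maximal work extractable from the bath's relaxation. -/
open scoped BigOperators

/-- Gibbs' inequality. -/
lemma gibbs_aux {α : Type*} [Fintype α] (p q : α → ℝ) (hp : ∀ a, 0 ≤ p a)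
    (hq : ∀ a, 0 ≤ q a) (hpq : ∀ a, 0 < p a → 0 < q a)
    (hsum : ∑ a, q a ≤ ∑ a, p a) :
    0 ≤ ∑ a, p a * Real.log (p a / q a) := by
  have key : ∀ a, p a - q a ≤ p a * Real.log (p a / q a) := by
    intro a
    rcases eq_or_lt_of_le (hp a) with h | h
    · rw [← h]; simp; linarith [hq a]
    · have hqa := hpq a h
      have hlog := Real.log_le_sub_one_of_pos (div_pos hqa h)
      have h1 : p a * Real.log (q a / p a) ≤ p a * (q a / p a - 1) :=
        mul_le_mul_of_nonneg_left hlog h.le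
      have h2 : p a * (q a / p a - 1) = q a - p a := by field_simp
      have h3 : Real.log (q a / p a) = - Real.log (p a / q a) := by
        rw [← Real.log_inv, inv_div]
      rw [h3, h2] at h1
      linarith
  have := Finset.sum_le_sum (fun a (_ : a ∈ Finset.univ) => key a)
  rw [Finset.sum_sub_distrib] at this
  linarith

/-- In the inclusive setup with a single bath, the reinitialization entropy
production is nonnegative: σ̄ ≥ 0. -/
theorem rep_nonneg
    {U V : Type*} [Fintype U] [Fintype V]
    (p0 : U → ℝ) (ρ0 : V → ℝ)
    (hp0 : ∀ u, 0 ≤ p0 u) (hp0sum : ∑ u, p0 u = 1)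
    (hρ0 : ∀ v, 0 < ρ0 v) (hρ0sum : ∑ v, ρ0 v = 1)
    (F : U × V ≃ U × V)
    (Pτ : U × V → ℝ)
    (hPτ : ∀ x, Pτ x = p0 (F.symm x).1 * ρ0 (F.symm x).2)
    (pτ : U → ℝ) (hpτ : ∀ u, pτ u = ∑ v, Pτ (u, v))
    (ρτ : V → ℝ) (hρτ : ∀ v, ρτ v = ∑ u, Pτ (u, v))
    (B : V → ℝ) (hB : ∀ v, B v = -Real.log (ρ0 v))
    (Qbar : ℝ) (hQbar : Qbar = ∑ v, ρ0 v * B v - ∑ v, ρτ v * B v)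
    (σbar : ℝ) (hσbar : σbar = (shannonH pτ - shannonH p0) - Qbar) :
    0 ≤ σbar := by
  have hPτ0 : ∀ x, 0 ≤ Pτ x := fun x => by
    rw [hPτ]; exact mul_nonneg (hp0 _) (hρ0 _).le
  have hpτ0 : ∀ u, 0 ≤ pτ u := fun u => by
    rw [hpτ]; exact Finset.sum_nonneg fun v _ => hPτ0 _
  have hppos : ∀ x : U × V, 0 < Pτ x → 0 < pτ x.1 := by
    intro x hx
    have hle : Pτ x ≤ pτ x.1 := by
      rw [hpτ]
      have := Finset.single_le_sum (f := fun v => Pτ (x.1, v))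
        (fun v _ => hPτ0 _) (Finset.mem_univ x.2)
      simpa using this
    linarith
  set q : U × V → ℝ := fun x => pτ x.1 * ρ0 x.2 with hq
  have hq0 : ∀ x, 0 ≤ q x := fun x => mul_nonneg (hpτ0 _) (hρ0 _).le
  have hqpos : ∀ x, 0 < Pτ x → 0 < q x := fun x hx =>
    mul_pos (hppos x hx) (hρ0 _)
  -- total sums
  have hsumPτ : ∑ x, Pτ x = 1 := by
    calc ∑ x, Pτ x = ∑ x, p0 (F.symm x).1 * ρ0 (F.symm x).2 := by
          exact Finset.sum_congr rfl fun x _ => hPτ x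
      _ = ∑ y : U × V, p0 y.1 * ρ0 y.2 := F.symm.sum_comp (fun y => p0 y.1 * ρ0 y.2)
      _ = ∑ u, ∑ v, p0 u * ρ0 v := Fintype.sum_prod_type _
      _ = (∑ u, p0 u) * (∑ v, ρ0 v) := (Finset.sum_mul_sum _ _ _ _).symm
      _ = 1 := by rw [hp0sum, hρ0sum]; ring
  have hsumpτ : ∑ u, pτ u = 1 := by
    have : ∑ u, pτ u = ∑ x : U × V, Pτ x := by
      rw [Fintype.sum_prod_type]
      exact Finset.sum_congr rfl fun u _ => (hpτ u)
    rw [this, hsumPτ]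
  have hsumq : ∑ x, q x = 1 := by
    calc ∑ x : U × V, q x = ∑ u, ∑ v, pτ u * ρ0 v := Fintype.sum_prod_type _
      _ = (∑ u, pτ u) * (∑ v, ρ0 v) := (Finset.sum_mul_sum _ _ _ _).symm
      _ = 1 := by rw [hsumpτ, hρ0sum]; ring
  -- abbreviations
  set A := ∑ u, p0 u * Real.log (p0 u) with hA
  set C := ∑ v, ρ0 v * Real.log (ρ0 v) with hC
  set D := ∑ u, pτ u * Real.log (pτ u) with hD
  set E := ∑ v, ρτ v * Real.log (ρ0 v) with hE
  -- pointwise splitting of the KL integrand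
  have point : ∀ x, Pτ x * Real.log (Pτ x / q x)
      = Pτ x * Real.log (Pτ x) - Pτ x * Real.log (pτ x.1)
        - Pτ x * Real.log (ρ0 x.2) := by
    intro x
    rcases eq_or_lt_of_le (hPτ0 x) with h | h
    · rw [← h]; ring
    · have hqx := hqpos x h
      have hpx := hppos x h
      rw [show q x = pτ x.1 * ρ0 x.2 from rfl,
        Real.log_div h.ne' hqx.ne', Real.log_mul hpx.ne' (hρ0 x.2).ne']
      ring
  -- the three component sums
  have S1 : ∑ x, Pτ x * Real.log (Pτ x) = A + C := by
    have e1 : ∑ x, Pτ x * Real.log (Pτ x)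
        = ∑ y : U × V, (p0 y.1 * ρ0 y.2) * Real.log (p0 y.1 * ρ0 y.2) := by
      rw [← F.symm.sum_comp (fun y => (p0 y.1 * ρ0 y.2) * Real.log (p0 y.1 * ρ0 y.2))]
      exact Finset.sum_congr rfl fun x _ => by rw [hPτ x]
    have e2 : ∀ (u : U) (v : V), (p0 u * ρ0 v) * Real.log (p0 u * ρ0 v)
        = p0 u * Real.log (p0 u) * ρ0 v + p0 u * (ρ0 v * Real.log (ρ0 v)) := by
      intro u v
      rcases eq_or_lt_of_le (hp0 u) with h | h
      · rw [← h]; ring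
      · rw [Real.log_mul h.ne' (hρ0 v).ne']; ring
    rw [e1, Fintype.sum_prod_type]
    have e3 : ∀ u : U, ∑ v, (p0 u * ρ0 v) * Real.log (p0 u * ρ0 v)
        = p0 u * Real.log (p0 u) + p0 u * C := by
      intro u
      rw [Finset.sum_congr rfl fun v _ => e2 u v, Finset.sum_add_distrib,
        ← Finset.mul_sum, ← Finset.mul_sum, hρ0sum, mul_one, ← hC]
    rw [Finset.sum_congr rfl fun u _ => e3 u, Finset.sum_add_distrib,
      ← Finset.sum_mul, hp0sum, one_mul, ← hA]
  have S2 : ∑ x : U × V, Pτ x * Real.log (pτ x.1) = D := by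
    rw [Fintype.sum_prod_type]
    refine Finset.sum_congr rfl fun u _ => ?_
    have : ∑ v, Pτ (u, v) * Real.log (pτ (u, v).1)
        = ∑ v, Pτ (u, v) * Real.log (pτ u) := rfl
    rw [this, ← Finset.sum_mul, ← hpτ u]
  have S3 : ∑ x : U × V, Pτ x * Real.log (ρ0 x.2) = E := by
    rw [Fintype.sum_prod_type_right]
    refine Finset.sum_congr rfl fun v _ => ?_
    have : ∑ u, Pτ (u, v) * Real.log (ρ0 (u, v).2)
        = ∑ u, Pτ (u, v) * Real.log (ρ0 v) := rfl
    rw [this, ← Finset.sum_mul, ← hρτ v]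
  -- the KL divergence equals σbar
  have hKL : ∑ x, Pτ x * Real.log (Pτ x / q x) = A + C - D - E := by
    rw [Finset.sum_congr rfl fun x _ => point x]
    rw [Finset.sum_sub_distrib, Finset.sum_sub_distrib, S1, S2, S3]
  have hσ : σbar = A + C - D - E := by
    have hB1 : ∑ v, ρ0 v * B v = -C := by
      rw [hC, ← Finset.sum_neg_distrib]
      exact Finset.sum_congr rfl fun v _ => by rw [hB]; ring
    have hB2 : ∑ v, ρτ v * B v = -E := by
      rw [hE, ← Finset.sum_neg_distrib]
      exact Finset.sum_congr rfl fun v _ => by rw [hB]; ring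
    rw [hσbar, hQbar, hB1, hB2, shannonH, shannonH, ← hA, ← hD]
    ring
  rw [hσ, ← hKL]
  exact gibbs_aux Pτ q hPτ0 hq0 hqpos (by rw [hsumPτ, hsumq])
end

section
/- (Lemma V.1) Let L be a language over a finite alphabet Σ, let M be a minimal DFA for L, and let M' be any DFA that accepts L. Let n ∈ ℕ, let μ be any probability distribution on words over Σ of length n, let W be a random word distributed according to μ, and for each t ≤ n let S_t := M.eval(W[0..t−1]) and S'_t := M'.eval(W[0..t−1]) be the states of the two DFAs after reading the first t symbols of W. Then for every t ≤ n, the Shannon entropy of the distribution of S_t is at most the Shannon entropy of the distribution of S'_t: H(S_t) ≤ H(S'_t). Equivalently, under the unilateral decomposition (where the reinitialization entropy production at iteration t equals the entropy of the DFA's state distribution at iteration t, the start state being deterministic), the minimal DFA for L has the least entropy production of all DFAs recognizing L, at every iteration t. -/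
open scoped BigOperators

attribute [local instance] Classical.propDecidable

/-- The distribution of the state of the DFA `M` after reading the first `t`
symbols of a random word of length `n` distributed according to `μ`. -/
noncomputable def stateLaw {A : Type*} [Fintype A] {σ : Type*} (M : DFA A σ)
    {n : ℕ} (μ : (Fin n → A) → ℝ) (t : ℕ) (ht : t ≤ n) : σ → ℝ :=
  fun s => ∑ w : Fin n → A,
    if M.eval (List.ofFn fun i : Fin t => w (Fin.castLE ht i)) = s then μ w else 0

/-- Entropy decreases under a deterministic map (data processing). -/
lemma entropy_push {U V : Type*} [Fintype U] [Fintype V] (f : U → V) (q : U → ℝ)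
    (hq : ∀ u, 0 ≤ q u) :
    shannonH (fun v => ∑ u, if f u = v then q u else 0) ≤ shannonH q := by
  set p : V → ℝ := fun v => ∑ u, if f u = v then q u else 0 with hp
  have hqp : ∀ u, q u ≤ p (f u) := by
    intro u
    have : q u = ∑ u', if u' = u then q u' else 0 := by simp
    rw [this]
    apply Finset.sum_le_sum
    intro u' _
    by_cases h : u' = u
    · simp [h]
    · simp [h]; split <;> simp [hq u']
  have key : ∑ v, p v * Real.log (p v) = ∑ u, q u * Real.log (p (f u)) := by
    have : ∀ v, p v * Real.log (p v) = ∑ u, if f u = v then q u * Real.log (p v) else 0 := by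
      intro v
      rw [hp]
      simp [Finset.sum_mul, ite_mul]
    rw [Finset.sum_congr rfl fun v _ => this v, Finset.sum_comm]
    apply Finset.sum_congr rfl
    intro u _
    simp
  have hterm : ∀ u, q u * Real.log (q u) ≤ q u * Real.log (p (f u)) := by
    intro u
    rcases eq_or_lt_of_le (hq u) with h | h
    · simp [← h]
    · exact mul_le_mul_of_nonneg_left (Real.log_le_log h (hqp u)) (hq u)
  have : ∑ u, q u * Real.log (q u) ≤ ∑ v, p v * Real.log (p v) := by
    rw [key]; exact Finset.sum_le_sum fun u _ => hterm u
  show -∑ v, p v * Real.log (p v) ≤ -∑ u, q u * Real.log (q u)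
  linarith

/-- (Lemma V.1) For any language L, any minimal DFA M for L, any DFA M' accepting L,
any distribution μ on words of length n, and any iteration t ≤ n, the Shannon
entropy of the state distribution of M at iteration t is at most that of M'. -/
theorem minimal_dfa_least_entropy
    {A : Type*} [Fintype A] {σ σ' : Type*} [Fintype σ] [Fintype σ']
    (L : Language A) (M : DFA A σ) (M' : DFA A σ')
    (hMacc : M.accepts = L)
    (hMmin : ∀ a b : List A, M.eval a = M.eval b ↔ ∀ w : List A, a ++ w ∈ L ↔ b ++ w ∈ L)
    (hM'acc : M'.accepts = L)
    (n : ℕ) (μ : (Fin n → A) → ℝ)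
    (hμ : ∀ w, 0 ≤ μ w) (hμsum : ∑ w, μ w = 1)
    (t : ℕ) (ht : t ≤ n) :
    shannonH (stateLaw M μ t ht) ≤ shannonH (stateLaw M' μ t ht) := by
  have hcongr : ∀ a b : List A, M'.eval a = M'.eval b → M.eval a = M.eval b := by
    intro a b h
    rw [hMmin]
    intro w
    rw [← hM'acc]
    have h' : M'.evalFrom M'.start a = M'.evalFrom M'.start b := h
    simp only [DFA.mem_accepts, DFA.eval, DFA.evalFrom_of_append, h']
  set f : σ' → σ := fun s' =>
    if h : ∃ a : List A, M'.eval a = s' then M.eval h.choose else M.eval [] with hfdef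
  have hf : ∀ a : List A, f (M'.eval a) = M.eval a := by
    intro a
    have hex : ∃ b : List A, M'.eval b = M'.eval a := ⟨a, rfl⟩
    rw [hfdef]
    simp only [dif_pos hex]
    exact hcongr _ _ hex.choose_spec
  have hlaw : stateLaw M μ t ht = fun s => ∑ s', if f s' = s then stateLaw M' μ t ht s' else 0 := by
    funext s
    have h1 : ∀ s' : σ', (if f s' = s then stateLaw M' μ t ht s' else 0)
        = ∑ w : Fin n → A,
          if M'.eval (List.ofFn fun i : Fin t => w (Fin.castLE ht i)) = s' ∧ f s' = s
          then μ w else 0 := by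
      intro s'
      by_cases h : f s' = s <;> simp [stateLaw, h]
    rw [show (∑ s', if f s' = s then stateLaw M' μ t ht s' else 0)
        = ∑ s', ∑ w : Fin n → A,
          (if M'.eval (List.ofFn fun i : Fin t => w (Fin.castLE ht i)) = s' ∧ f s' = s
           then μ w else 0) from Finset.sum_congr rfl fun s' _ => h1 s', Finset.sum_comm]
    simp only [stateLaw]
    apply Finset.sum_congr rfl
    intro w _
    simp [ite_and, hf]
  rw [hlaw]
  apply entropy_push
  intro s'
  apply Finset.sum_nonneg
  intro w _
  split
  · exact hμ w
  · exact le_rfl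
end

section
/- Let L be a language over a finite alphabet Σ, let M be a minimal DFA for L, and let M' be any DFA that accepts L. Then the state equivalence induced by M' refines that of M: for all words a, b over Σ, if M'.eval a = M'.eval b then M.eval a = M.eval b. -/
/-- Let L be a language over an alphabet, M a minimal DFA for L, and M' any DFA
that accepts L. Then the state equivalence induced by M' refines that of M:
whenever M' sends two words to the same state, so does M. -/
theorem minimal_dfa_equivalence_coarsest
    {A : Type*} {σ σ' : Type*} [Fintype σ] [Fintype σ']
    (L : Language A) (M : DFA A σ) (M' : DFA A σ')
    (hMacc : M.accepts = L)
    (hMmin : ∀ a b : List A, M.eval a = M.eval b ↔ ∀ w : List A, a ++ w ∈ L ↔ b ++ w ∈ L)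
    (hM'acc : M'.accepts = L) :
    ∀ a b : List A, M'.eval a = M'.eval b → M.eval a = M.eval b := by
  intro a b h
  rw [hMmin]
  intro w
  have : ∀ x : List A, x ∈ L ↔ M'.eval x ∈ M'.accept := by
    intro x; rw [← hM'acc]; rfl
  rw [this, this]
  show M'.evalFrom M'.start (a ++ w) ∈ _ ↔ M'.evalFrom M'.start (b ++ w) ∈ _
  rw [DFA.evalFrom_of_append, DFA.evalFrom_of_append]
  have h' : M'.evalFrom M'.start a = M'.evalFrom M'.start b := h
  rw [h']
end

section
/- (Theorem V.2) Let L be a language over a finite alphabet Σ, let M be a minimal DFA for L, and let M' be any DFA that accepts L. Let n ∈ ℕ, let μ be any probability distribution on words over Σ of length n, let W ∼ μ, and for t ≤ n let S_t := M.eval(W[0..t−1]) and S'_t := M'.eval(W[0..t−1]). Let V_t := h(W) for an arbitrary function h (the bath state at iteration t, identical for both machines). Then for every t ≤ n, I(S_t ; V_t) ≤ I(S'_t ; V_t). Consequently, defining for each machine the reinitialization entropy production σ̄ := I(state at t ; V_t) + D(law(V_t) ‖ ρ₀), where the divergence term D(law(V_t) ‖ ρ₀) is common to both machines, the minimal DFA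 satisfies σ̄_M ≤ σ̄_{M'}. -/
open scoped BigOperators

attribute [local instance] Classical.propDecidable

/-- The joint distribution of the state of `M` at iteration `t` and the bath
state `h W`. -/
noncomputable def jointLaw {A : Type*} [Fintype A] {σ R : Type*} (M : DFA A σ)
    {n : ℕ} (μ : (Fin n → A) → ℝ) (h : (Fin n → A) → R) (t : ℕ) (ht : t ≤ n) :
    σ × R → ℝ :=
  fun x => ∑ w : Fin n → A,
    if M.eval (List.ofFn fun i : Fin t => w (Fin.castLE ht i)) = x.1 ∧ h w = x.2
    then μ w else 0

/-- The distribution of the bath state `h W`. -/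
noncomputable def bathLaw {A : Type*} [Fintype A] {R : Type*}
    {n : ℕ} (μ : (Fin n → A) → ℝ) (h : (Fin n → A) → R) : R → ℝ :=
  fun r => ∑ w : Fin n → A, if h w = r then μ w else 0

/-- Mutual information I(S_t ; V_t) between the state of `M` at iteration `t`
and the bath state `h W`: I(X;Y) = H(X) + H(Y) − H(X,Y). -/
noncomputable def stateBathMI {A : Type*} [Fintype A] {σ R : Type*} [Fintype σ]
    [Fintype R] (M : DFA A σ) {n : ℕ} (μ : (Fin n → A) → ℝ)
    (h : (Fin n → A) → R) (t : ℕ) (ht : t ≤ n) : ℝ :=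
  shannonH (stateLaw M μ t ht) + shannonH (bathLaw μ h) - shannonH (jointLaw M μ h t ht)

/-- Log-sum inequality. -/
lemma logSum_ineq {ι : Type*} (T : Finset ι) (a b : ι → ℝ)
    (ha : ∀ i ∈ T, 0 ≤ a i) (hb : ∀ i ∈ T, 0 ≤ b i)
    (hab : ∀ i ∈ T, b i = 0 → a i = 0) :
    (∑ i ∈ T, a i) * Real.log ((∑ i ∈ T, a i) / (∑ i ∈ T, b i)) ≤
      ∑ i ∈ T, a i * Real.log (a i / b i) := by
  set A := ∑ i ∈ T, a i with hA
  set B := ∑ i ∈ T, b i with hB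
  by_cases hB0 : B = 0
  · have hb0 : ∀ i ∈ T, b i = 0 := by
      intro i hi
      exact (Finset.sum_eq_zero_iff_of_nonneg hb).mp hB0 i hi
    have ha0 : ∀ i ∈ T, a i = 0 := fun i hi => hab i hi (hb0 i hi)
    have hA0 : A = 0 := Finset.sum_eq_zero ha0
    have : ∑ i ∈ T, a i * Real.log (a i / b i) = 0 :=
      Finset.sum_eq_zero fun i hi => by rw [ha0 i hi]; ring
    rw [this, hA0]; simp
  have hBpos : 0 < B := lt_of_le_of_ne (Finset.sum_nonneg hb) (Ne.symm hB0)
  have jensen := Real.convexOn_mul_log.map_sum_le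
      (t := T) (w := fun i => b i / B) (p := fun i => a i / b i)
      (fun i hi => div_nonneg (hb i hi) hBpos.le)
      (by rw [← Finset.sum_div, div_self hB0])
      (fun i hi => div_nonneg (ha i hi) (hb i hi))
  have hsum : ∑ i ∈ T, (b i / B) • (a i / b i) = A / B := by
    rw [hA, Finset.sum_div]
    refine Finset.sum_congr rfl fun i hi => ?_
    by_cases hbi : b i = 0
    · simp [hbi, hab i hi hbi]
    · field_simp
      simp only [smul_eq_mul]; field_simp
  have hrhs : ∑ i ∈ T, (b i / B) • ((a i / b i) * Real.log (a i / b i)) =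
      (∑ i ∈ T, a i * Real.log (a i / b i)) / B := by
    rw [Finset.sum_div]
    refine Finset.sum_congr rfl fun i hi => ?_
    by_cases hbi : b i = 0
    · simp [hbi, hab i hi hbi]
    · simp only [smul_eq_mul]
      field_simp
  rw [hsum] at jensen
  simp only [smul_eq_mul] at jensen hrhs
  rw [hrhs] at jensen
  have : A / B * Real.log (A / B) * B ≤ (∑ i ∈ T, a i * Real.log (a i / b i)) / B * B :=
    mul_le_mul_of_nonneg_right jensen hBpos.le
  calc A * Real.log (A / B) = A / B * Real.log (A / B) * B := by field_simp
    _ ≤ (∑ i ∈ T, a i * Real.log (a i / b i)) / B * B := this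
    _ = ∑ i ∈ T, a i * Real.log (a i / b i) := by field_simp

/-- Difference of entropies of a joint law and its first marginal. -/
lemma marg_diff {X Y : Type*} [Fintype X] [Fintype Y] (u : X × Y → ℝ)
    (hu : ∀ z, 0 ≤ u z) (uX : X → ℝ) (huX : ∀ x, uX x = ∑ y, u (x, y)) :
    shannonH uX - shannonH u = ∑ x, ∑ y, u (x, y) * Real.log (u (x, y) / uX x) := by
  have key : ∀ x y, u (x, y) * Real.log (u (x, y) / uX x) =
      u (x, y) * Real.log (u (x, y)) - u (x, y) * Real.log (uX x) := by
    intro x y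
    by_cases h0 : u (x, y) = 0
    · simp [h0]
    have hupos : 0 < u (x, y) := lt_of_le_of_ne (hu _) (Ne.symm h0)
    have hXpos : 0 < uX x := by
      rw [huX]
      exact lt_of_lt_of_le hupos (Finset.single_le_sum (fun y _ => hu (x, y))
        (Finset.mem_univ y))
    rw [Real.log_div h0 hXpos.ne', mul_sub]
  simp only [key]
  rw [Finset.sum_congr rfl (fun x _ => Finset.sum_sub_distrib _ _)]
  rw [Finset.sum_sub_distrib]
  unfold shannonH
  rw [Fintype.sum_prod_type]
  have : ∀ x : X, ∑ y, u (x, y) * Real.log (uX x) = uX x * Real.log (uX x) := by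
    intro x
    rw [← Finset.sum_mul, ← huX]
  rw [Finset.sum_congr rfl (fun x _ => this x)]
  ring

/-- Data-processing / grouping inequality for I-via-entropies. -/
lemma group_entropy_le {X S Y : Type*} [Fintype X] [Fintype S] [Fintype Y]
    (f : X → S) (p : X × Y → ℝ) (hp : ∀ z, 0 ≤ p z)
    (pX : X → ℝ) (hpX : ∀ x, pX x = ∑ y, p (x, y))
    (q : S × Y → ℝ) (hq : ∀ s y, q (s, y) = ∑ x, if f x = s then p (x, y) else 0)
    (qS : S → ℝ) (hqS : ∀ s, qS s = ∑ x, if f x = s then pX x else 0) :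
    shannonH qS - shannonH q ≤ shannonH pX - shannonH p := by
  have hq0 : ∀ z, 0 ≤ q z := by
    intro z
    rw [show z = (z.1, z.2) from rfl, hq]
    exact Finset.sum_nonneg fun x _ => by split_ifs with hfx; exacts [hp _, le_rfl]
  rw [marg_diff p hp pX hpX, marg_diff q hq0 qS (fun s => by
    rw [hqS]
    simp only [hq]
    rw [Finset.sum_comm]
    refine Finset.sum_congr rfl fun x _ => ?_
    by_cases hfx : f x = s
    · simp [hfx, hpX]
    · simp [hfx])]
  -- reduce to per-(y, s) log-sum over fibers
  calc ∑ s : S, ∑ y : Y, q (s, y) * Real.log (q (s, y) / qS s)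
      = ∑ y : Y, ∑ s : S, q (s, y) * Real.log (q (s, y) / qS s) := Finset.sum_comm
    _ ≤ ∑ y : Y, ∑ x : X, p (x, y) * Real.log (p (x, y) / pX x) := ?_
    _ = ∑ x : X, ∑ y : Y, p (x, y) * Real.log (p (x, y) / pX x) := Finset.sum_comm
  refine Finset.sum_le_sum fun y _ => ?_
  have fib : ∀ g : X → ℝ, ∑ x, g x = ∑ s, ∑ x ∈ Finset.univ.filter (fun x => f x = s), g x := by
    intro g
    exact (Finset.sum_fiberwise Finset.univ f g).symm
  rw [fib (fun x => p (x, y) * Real.log (p (x, y) / pX x))]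
  refine Finset.sum_le_sum fun s _ => ?_
  have hqval : q (s, y) = ∑ x ∈ Finset.univ.filter (fun x => f x = s), p (x, y) := by
    rw [hq, Finset.sum_filter]
  have hqSval : qS s = ∑ x ∈ Finset.univ.filter (fun x => f x = s), pX x := by
    rw [hqS, Finset.sum_filter]
  rw [hqval, hqSval]
  refine logSum_ineq _ _ _ (fun x _ => hp _) (fun x _ => by rw [hpX]; exact Finset.sum_nonneg fun y _ => hp _) ?_
  intro x _ hx0
  have : p (x, y) ≤ pX x := by
    rw [hpX]
    exact Finset.single_le_sum (fun y _ => hp (x, y)) (Finset.mem_univ y)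
  have := this.trans_eq hx0
  exact le_antisymm this (hp _)

/-- Pushforward fiber decomposition. -/
lemma push_eq2 {W X S Y : Type*} [Fintype W] [Fintype X] (μ : W → ℝ)
    (g : W → X) (F : X → S) (k : W → Y) (s : S) (y : Y) :
    (∑ w, if F (g w) = s ∧ k w = y then μ w else 0) =
      ∑ x, if F x = s then (∑ w, if g w = x ∧ k w = y then μ w else 0) else 0 := by
  classical
  have h1 : ∀ x : X, (if F x = s then (∑ w, if g w = x ∧ k w = y then μ w else 0) else 0)
      = ∑ w, if g w = x ∧ (F x = s ∧ k w = y) then μ w else 0 := by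
    intro x
    split_ifs with hFx
    · exact Finset.sum_congr rfl fun w _ => by simp [hFx]
    · exact (Finset.sum_eq_zero fun w _ => by simp [hFx]).symm
  rw [Finset.sum_congr rfl fun x _ => h1 x, Finset.sum_comm]
  refine Finset.sum_congr rfl fun w _ => ?_
  have h2 : ∀ x : X, (if g w = x ∧ (F x = s ∧ k w = y) then μ w else 0)
      = if g w = x then (if F x = s ∧ k w = y then μ w else 0) else 0 := by
    intro x; by_cases h1' : g w = x <;> simp [h1']
  rw [Finset.sum_congr rfl fun x _ => h2 x, Finset.sum_ite_eq Finset.univ (g w)]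
  simp

/-- (Theorem V.2) For any language L, minimal DFA M for L, DFA M' accepting L,
distribution μ on words of length n, bath variable V_t = h(W), and iteration
t ≤ n: I(S_t ; V_t) ≤ I(S'_t ; V_t); consequently, with the common divergence
term D(law(V_t) ‖ ρ₀), the reinitialization entropy production of the minimal
DFA is at most that of M': σ̄_M ≤ σ̄_{M'}. -/
theorem minimal_dfa_least_EP
    {A : Type*} [Fintype A] {σ σ' R : Type*} [Fintype σ] [Fintype σ'] [Fintype R]
    (L : Language A) (M : DFA A σ) (M' : DFA A σ')
    (hMacc : M.accepts = L)
    (hMmin : ∀ a b : List A, M.eval a = M.eval b ↔ ∀ w : List A, a ++ w ∈ L ↔ b ++ w ∈ L)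
    (hM'acc : M'.accepts = L)
    (n : ℕ) (μ : (Fin n → A) → ℝ)
    (hμ : ∀ w, 0 ≤ μ w) (hμsum : ∑ w, μ w = 1)
    (h : (Fin n → A) → R)
    (ρ0 : R → ℝ) (hρ0 : ∀ r, 0 < ρ0 r) (hρ0sum : ∑ r, ρ0 r = 1)
    (t : ℕ) (ht : t ≤ n) :
    stateBathMI M μ h t ht ≤ stateBathMI M' μ h t ht ∧
      stateBathMI M μ h t ht + klDiv (bathLaw μ h) ρ0 ≤
        stateBathMI M' μ h t ht + klDiv (bathLaw μ h) ρ0 := by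
  classical
  -- the map from M' states to M states
  have hex : ∃ f : σ' → σ, ∀ a : List A, f (M'.eval a) = M.eval a := by
    refine ⟨fun s => if hx : ∃ a : List A, M'.eval a = s then M.eval hx.choose
      else M.eval [], fun a => ?_⟩
    have hx : ∃ b : List A, M'.eval b = M'.eval a := ⟨a, rfl⟩
    show (if hx' : ∃ b : List A, M'.eval b = M'.eval a then M.eval hx'.choose
      else M.eval []) = M.eval a
    rw [dif_pos hx]
    refine (hMmin _ _).mpr fun w => ?_
    have hspec : M'.eval hx.choose = M'.eval a := hx.choose_spec
    have key : ∀ u : List A, (u ++ w ∈ L) ↔ M'.evalFrom (M'.eval u) w ∈ M'.accept := by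
      intro u
      rw [← hM'acc, DFA.mem_accepts]
      have : M'.eval (u ++ w) = M'.evalFrom (M'.eval u) w := M'.evalFrom_of_append M'.start u w
      rw [this]
    rw [key, key, hspec]
  obtain ⟨f, hf⟩ := hex
  set pre : (Fin n → A) → List A :=
    fun w => List.ofFn fun i : Fin t => w (Fin.castLE ht i) with hpre
  have hjointM : ∀ s r, jointLaw M μ h t ht (s, r) =
      ∑ x : σ', if f x = s then jointLaw M' μ h t ht (x, r) else 0 := by
    intro s r
    have e1 : jointLaw M μ h t ht (s, r) =
        ∑ w, if f (M'.eval (pre w)) = s ∧ h w = r then μ w else 0 :=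
      Finset.sum_congr rfl fun w _ => by rw [hf]
    rw [e1, push_eq2 μ (fun w => M'.eval (pre w)) f h s r]
    rfl
  have hstateM : ∀ s, stateLaw M μ t ht s =
      ∑ x : σ', if f x = s then stateLaw M' μ t ht x else 0 := by
    intro s
    have key := push_eq2 (Y := Unit) μ (fun w => M'.eval (pre w)) f (fun _ => ()) s ()
    simp only [and_true] at key
    have e1 : stateLaw M μ t ht s =
        ∑ w, if f (M'.eval (pre w)) = s then μ w else 0 :=
      Finset.sum_congr rfl fun w _ => by rw [hf]
    rw [e1, key]
    rfl
  have hmarg : ∀ x : σ', stateLaw M' μ t ht x = ∑ r : R, jointLaw M' μ h t ht (x, r) := by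
    intro x
    unfold stateLaw jointLaw
    rw [Finset.sum_comm]
    refine Finset.sum_congr rfl fun w _ => ?_
    by_cases hc : M'.eval (pre w) = x
    · simp only [hpre] at hc; simp [hc, Finset.sum_ite_eq]
    · simp only [hpre] at hc; simp [hc]
  have hpnn : ∀ z : σ' × R, 0 ≤ jointLaw M' μ h t ht z := by
    intro z
    exact Finset.sum_nonneg fun w _ => by split_ifs; exacts [hμ w, le_rfl]
  have main := group_entropy_le f (jointLaw M' μ h t ht) hpnn
    (stateLaw M' μ t ht) hmarg (jointLaw M μ h t ht) (fun s y => hjointM s y)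
    (stateLaw M μ t ht) hstateM
  have h1 : stateBathMI M μ h t ht ≤ stateBathMI M' μ h t ht := by
    unfold stateBathMI
    linarith
  exact ⟨h1, add_le_add_left h1 _⟩
end

section
/- (Integral fluctuation theorem) In the inclusive setup with a single bath, with trajectory-level entropy production σ(u₀,v₀) := [ln p₀(u₀) − ln p_τ(u_τ)] − [B(v₀) − B(v_τ)] for (u_τ,v_τ) := F(u₀,v₀), the expectation of e^{−σ} over the forward process satisfies Σ_{(u₀,v₀) : p₀(u₀) > 0} p₀(u₀)·ρ₀(v₀)·e^{−σ(u₀,v₀)} = 1 − κ, where κ := Σ_{(u',v') : p₀((F⁻¹(u',v')).1) = 0} p_τ(u')·ρ₀(v') is the probability under the reverse process of producing a trajectory whose forward version cannot occur. -/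
open scoped BigOperators

attribute [local instance] Classical.propDecidable

/-- (Integral fluctuation theorem) In the inclusive setup with a single bath,
the expectation of e^{−σ} over the forward process equals 1 − κ, where κ is the
probability, under the reverse process, of producing a trajectory whose forward
version cannot occur. -/
theorem integral_fluctuation_theorem
    {U V : Type*} [Fintype U] [Fintype V]
    (p0 : U → ℝ) (ρ0 : V → ℝ)
    (hp0 : ∀ u, 0 ≤ p0 u) (hp0sum : ∑ u, p0 u = 1)
    (hρ0 : ∀ v, 0 < ρ0 v) (hρ0sum : ∑ v, ρ0 v = 1)
    (F : U × V ≃ U × V)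
    (Pτ : U × V → ℝ)
    (hPτ : ∀ x, Pτ x = p0 (F.symm x).1 * ρ0 (F.symm x).2)
    (pτ : U → ℝ) (hpτ : ∀ u, pτ u = ∑ v, Pτ (u, v))
    (B : V → ℝ) (hB : ∀ v, B v = -Real.log (ρ0 v))
    (σ : U × V → ℝ)
    (hσ : ∀ x : U × V, σ x =
      (Real.log (p0 x.1) - Real.log (pτ (F x).1)) - (B x.2 - B (F x).2))
    (κ : ℝ)
    (hκ : κ = ∑ x ∈ Finset.univ.filter (fun x : U × V => p0 (F.symm x).1 = 0),
      pτ x.1 * ρ0 x.2) :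
    ∑ x ∈ Finset.univ.filter (fun x : U × V => 0 < p0 x.1),
      p0 x.1 * ρ0 x.2 * Real.exp (-σ x) = 1 - κ := by
  have hPτnn : ∀ x : U × V, 0 ≤ Pτ x := fun x => by
    rw [hPτ]; exact mul_nonneg (hp0 _) (hρ0 _).le
  have hpτnn : ∀ u, 0 ≤ pτ u := fun u => by
    rw [hpτ]; exact Finset.sum_nonneg fun v _ => hPτnn _
  have hpτpos : ∀ x : U × V, 0 < p0 x.1 → 0 < pτ (F x).1 := by
    intro x hx
    have h1 : 0 < Pτ (F x) := by
      rw [hPτ, Equiv.symm_apply_apply]; exact mul_pos hx (hρ0 _)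
    rw [hpτ]
    calc 0 < Pτ ((F x).1, (F x).2) := h1
      _ ≤ ∑ v, Pτ ((F x).1, v) :=
        Finset.single_le_sum (fun v _ => hPτnn _) (Finset.mem_univ _)
  have hterm : ∀ x : U × V, 0 < p0 x.1 →
      p0 x.1 * ρ0 x.2 * Real.exp (-σ x) = pτ (F x).1 * ρ0 (F x).2 := by
    intro x hx
    have h1 := hpτpos x hx
    have h2 := hρ0 x.2
    have h3 := hρ0 (F x).2
    have key : -σ x = (Real.log (pτ (F x).1) + Real.log (ρ0 (F x).2)) -
        (Real.log (p0 x.1) + Real.log (ρ0 x.2)) := by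
      rw [hσ, hB, hB]; ring
    rw [key, Real.exp_sub, Real.exp_add, Real.exp_add,
      Real.exp_log h1, Real.exp_log h2, Real.exp_log h3, Real.exp_log hx]
    field_simp
  have hsum1 : ∑ x ∈ Finset.univ.filter (fun x : U × V => 0 < p0 x.1),
      p0 x.1 * ρ0 x.2 * Real.exp (-σ x)
      = ∑ y ∈ Finset.univ.filter (fun y : U × V => 0 < p0 (F.symm y).1),
        pτ y.1 * ρ0 y.2 := by
    refine Finset.sum_equiv F (fun x => ?_) (fun x hx => ?_)
    · simp
    · exact hterm x (by simpa using hx)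
  have hpτsum : ∑ u, pτ u = 1 := by
    have h1 : ∑ u, pτ u = ∑ x : U × V, Pτ x := by
      rw [Fintype.sum_prod_type]
      exact Finset.sum_congr rfl fun u _ => hpτ u
    have h2 : ∑ x : U × V, Pτ x = ∑ x : U × V, p0 x.1 * ρ0 x.2 := by
      rw [show (fun x : U × V => Pτ x) = fun x => p0 (F.symm x).1 * ρ0 (F.symm x).2
        from funext hPτ]
      exact Equiv.sum_comp F.symm (fun y : U × V => p0 y.1 * ρ0 y.2)
    rw [h1, h2, Fintype.sum_prod_type]
    simp only [← Finset.mul_sum, hρ0sum, mul_one]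
    exact hp0sum
  have htot : ∑ y : U × V, pτ y.1 * ρ0 y.2 = 1 := by
    rw [Fintype.sum_prod_type]
    simp only [← Finset.mul_sum, hρ0sum, mul_one]
    exact hpτsum
  have hsplit := Finset.sum_filter_add_sum_filter_not Finset.univ
    (fun y : U × V => 0 < p0 (F.symm y).1) (fun y => pτ y.1 * ρ0 y.2)
  have hfe : Finset.univ.filter (fun y : U × V => ¬ 0 < p0 (F.symm y).1)
      = Finset.univ.filter (fun y : U × V => p0 (F.symm y).1 = 0) := by
    apply Finset.filter_congr
    intro y _
    simp only [not_lt]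
    exact ⟨fun h => le_antisymm h (hp0 _), fun h => h.le⟩
  rw [hfe, htot, ← hκ] at hsplit
  rw [hsum1]
  linarith
end

section
/- (Mismatch cost theorem for the inclusive Hamiltonian framework) In the mismatch setup, suppose α is a probability distribution on U with full support that minimizes σ̄ over all probability distributions on U. Then for every probability distribution β on U, the mismatch cost satisfies 𝒲 := σ̄(β) − σ̄(α) = D(β ‖ α) − D(Tβ ‖ Tα); in particular 𝒲 ≥ 0. -/
open scoped BigOperators

/-- Action of a Markov kernel `T` (where `T u` is the distribution `T(·|u)`) on
a distribution `p`: `(Tp)(u') = Σ_u p(u)·T(u'|u)`. -/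
noncomputable def kernelAct {U : Type*} [Fintype U] (T : U → U → ℝ) (p : U → ℝ) :
    U → ℝ :=
  fun u' => ∑ u, p u * T u u'

/-- The entropy production functional of the mismatch setup:
σ̄(p) = H(Tp) − H(p) − Σ_u p(u)·Q(u). -/
noncomputable def epFunctional {U : Type*} [Fintype U] (T : U → U → ℝ)
    (Q : U → ℝ) (p : U → ℝ) : ℝ :=
  shannonH (kernelAct T p) - shannonH p - ∑ u, p u * Q u

noncomputable def mcostC {U : Type*} [Fintype U] (T : U → U → ℝ) (Q : U → ℝ)
    (α : U → ℝ) (u : U) : ℝ :=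
  Real.log (α u) - Q u - ∑ u', T u u' * Real.log (kernelAct T α u')

lemma klDiv_expand {U : Type*} [Fintype U] (p q : U → ℝ)
    (hz : ∀ u, q u = 0 → p u = 0) :
    klDiv p q = (∑ u, p u * Real.log (p u)) - ∑ u, p u * Real.log (q u) := by
  rw [klDiv, ← Finset.sum_sub_distrib]
  refine Finset.sum_congr rfl fun u _ => ?_
  rcases eq_or_ne (p u) 0 with h | h
  · simp [h]
  · have hq : q u ≠ 0 := fun hq0 => h (hz u hq0)
    rw [Real.log_div h hq]; ring

lemma klDiv_self {U : Type*} [Fintype U] (p : U → ℝ) : klDiv p p = 0 := by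
  refine Finset.sum_eq_zero fun u _ => ?_
  rcases eq_or_ne (p u) 0 with h | h
  · simp [h]
  · rw [div_self h, Real.log_one, mul_zero]

lemma klDiv_nonneg' {U : Type*} [Fintype U] (p q : U → ℝ)
    (hp : ∀ u, 0 ≤ p u) (hq : ∀ u, 0 ≤ q u)
    (hps : ∑ u, p u = 1) (hqs : ∑ u, q u = 1)
    (hz : ∀ u, q u = 0 → p u = 0) : 0 ≤ klDiv p q := by
  have h : ∀ u ∈ Finset.univ, p u - q u ≤ p u * Real.log (p u / q u) := by
    intro u _
    rcases eq_or_ne (p u) 0 with h0 | h0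
    · have := hq u; simp [h0]; linarith
    · have hpu : 0 < p u := lt_of_le_of_ne (hp u) (Ne.symm h0)
      have hqu : 0 < q u := lt_of_le_of_ne (hq u) (by intro h; exact h0 (hz u h.symm))
      have h1 := Real.log_le_sub_one_of_pos (div_pos hqu hpu)
      have hlog : Real.log (q u / p u) = - Real.log (p u / q u) := by
        rw [← Real.log_inv, inv_div]
      rw [hlog] at h1
      have h3 : p u * (q u / p u - 1) = q u - p u := by field_simp
      nlinarith [mul_le_mul_of_nonneg_left h1 (hp u)]
  calc (0:ℝ) = ∑ u, (p u - q u) := by rw [Finset.sum_sub_distrib, hps, hqs]; ring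
  _ ≤ _ := Finset.sum_le_sum h

lemma klDiv_le_chi {U : Type*} [Fintype U] (p q : U → ℝ)
    (hp : ∀ u, 0 ≤ p u) (hq : ∀ u, 0 < q u) :
    klDiv p q ≤ (∑ u, (p u)^2 / q u) - ∑ u, p u := by
  rw [klDiv, ← Finset.sum_sub_distrib]
  refine Finset.sum_le_sum fun u _ => ?_
  rcases eq_or_ne (p u) 0 with h0 | h0
  · simp [h0]
  · have hpu : 0 < p u := lt_of_le_of_ne (hp u) (Ne.symm h0)
    have h1 := Real.log_le_sub_one_of_pos (div_pos hpu (hq u))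
    have hq' := hq u
    calc p u * Real.log (p u / q u) ≤ p u * (p u / q u - 1) :=
          mul_le_mul_of_nonneg_left h1 (hp u)
    _ = (p u)^2 / q u - p u := by field_simp

lemma kernelAct_nonneg {U : Type*} [Fintype U] (T : U → U → ℝ) (p : U → ℝ)
    (hT : ∀ u u', 0 ≤ T u u') (hp : ∀ u, 0 ≤ p u) : ∀ u', 0 ≤ kernelAct T p u' :=
  fun u' => Finset.sum_nonneg fun u _ => mul_nonneg (hp u) (hT u u')

lemma kernelAct_sum {U : Type*} [Fintype U] (T : U → U → ℝ) (p : U → ℝ)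
    (hTsum : ∀ u, ∑ u', T u u' = 1) : ∑ u', kernelAct T p u' = ∑ u, p u := by
  rw [show ∑ u', kernelAct T p u' = ∑ u', ∑ u, p u * T u u' from rfl, Finset.sum_comm]
  simp only [← Finset.mul_sum, hTsum, mul_one]

lemma kernelAct_zero {U : Type*} [Fintype U] (T : U → U → ℝ) (α p : U → ℝ)
    (hT : ∀ u u', 0 ≤ T u u') (hα : ∀ u, 0 < α u) :
    ∀ u', kernelAct T α u' = 0 → kernelAct T p u' = 0 := by
  intro u' h
  have hTz : ∀ u, T u u' = 0 := by
    intro u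
    have h0 := (Finset.sum_eq_zero_iff_of_nonneg
      (fun u _ => mul_nonneg (hα u).le (hT u u'))).mp h u (Finset.mem_univ u)
    exact (mul_eq_zero.mp h0).resolve_left (hα u).ne'
  simp [kernelAct, hTz]

lemma ep_identity {U : Type*} [Fintype U] (T : U → U → ℝ) (Q : U → ℝ) (α p : U → ℝ)
    (hα : ∀ u, 0 < α u)
    (hz : ∀ u', kernelAct T α u' = 0 → kernelAct T p u' = 0) :
    epFunctional T Q p = klDiv p α - klDiv (kernelAct T p) (kernelAct T α)
      + ∑ u, p u * mcostC T Q α u := by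
  have h1 : klDiv p α = (∑ u, p u * Real.log (p u)) - ∑ u, p u * Real.log (α u) :=
    klDiv_expand p α fun u h => absurd h (hα u).ne'
  have h2 : klDiv (kernelAct T p) (kernelAct T α)
      = (∑ u', kernelAct T p u' * Real.log (kernelAct T p u'))
        - ∑ u', kernelAct T p u' * Real.log (kernelAct T α u') :=
    klDiv_expand _ _ hz
  have hfub : ∑ u', kernelAct T p u' * Real.log (kernelAct T α u')
      = ∑ u, p u * ∑ u', T u u' * Real.log (kernelAct T α u') := by
    simp only [kernelAct, Finset.sum_mul, Finset.mul_sum, mul_assoc]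
    rw [Finset.sum_comm]
  have hc : ∑ u, p u * mcostC T Q α u
      = (∑ u, p u * Real.log (α u)) - (∑ u, p u * Q u)
        - ∑ u, p u * ∑ u', T u u' * Real.log (kernelAct T α u') := by
    simp only [mcostC, mul_sub, Finset.sum_sub_distrib]
  rw [epFunctional, shannonH, shannonH, h1, h2, hc, ← hfub]
  ring

/-- (Mismatch cost theorem for the inclusive Hamiltonian framework) If a
full-support probability distribution α minimizes σ̄ over all probability
distributions on U, then for every probability distribution β the mismatch cost
satisfies 𝒲 = σ̄(β) − σ̄(α) = D(β ‖ α) − D(Tβ ‖ Tα); in particular 𝒲 ≥ 0. -/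
theorem mismatch_cost
    {U : Type*} [Fintype U]
    (T : U → U → ℝ) (hT : ∀ u u', 0 ≤ T u u') (hTsum : ∀ u, ∑ u', T u u' = 1)
    (Q : U → ℝ)
    (α : U → ℝ) (hα : ∀ u, 0 < α u) (hαsum : ∑ u, α u = 1)
    (hαmin : ∀ p : U → ℝ, (∀ u, 0 ≤ p u) → ∑ u, p u = 1 →
      epFunctional T Q α ≤ epFunctional T Q p) :
    ∀ β : U → ℝ, (∀ u, 0 ≤ β u) → ∑ u, β u = 1 →
      epFunctional T Q β - epFunctional T Q α =
        klDiv β α - klDiv (kernelAct T β) (kernelAct T α) ∧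
      0 ≤ epFunctional T Q β - epFunctional T Q α := by
  intro β hβ hβsum
  classical
  set c : U → ℝ := mcostC T Q α with hcdef
  have hid : ∀ p : U → ℝ,
      epFunctional T Q p = klDiv p α - klDiv (kernelAct T p) (kernelAct T α)
        + ∑ u, p u * c u :=
    fun p => ep_identity T Q α p hα (kernelAct_zero T α p hT hα)
  set Lα : ℝ := ∑ u, α u * c u with hLα
  have hσα : epFunctional T Q α = Lα := by
    rw [hid α, klDiv_self, klDiv_self]; ring
  have hkey : ∀ u0 : U, Lα ≤ c u0 := by
    intro u0
    set d : U → ℝ := fun v => (if v = u0 then 1 else 0) - α v with hd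
    have hds : ∑ v, d v = 0 := by
      simp [hd, Finset.sum_sub_distrib, hαsum]
    have hdc : ∑ v, d v * c v = c u0 - Lα := by
      simp only [hd, sub_mul, Finset.sum_sub_distrib, ite_mul, one_mul, zero_mul]
      rw [Finset.sum_ite_eq' Finset.univ u0 c]
      simp [hLα]
    set C : ℝ := ∑ v, (d v)^2 / α v with hC
    have hC0 : 0 ≤ C := Finset.sum_nonneg fun v _ => div_nonneg (sq_nonneg _) (hα v).le
    have hstep : ∀ lam : ℝ, 0 < lam → lam < 1 → Lα - lam * C ≤ c u0 := by
      intro lam hl0 hl1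
      set p : U → ℝ := fun v => α v + lam * d v with hp
      have hp0 : ∀ v, 0 ≤ p v := by
        intro v
        have hv := (hα v).le
        show 0 ≤ α v + lam * ((if v = u0 then 1 else 0) - α v)
        rcases eq_or_ne v u0 with h | h
        · rw [if_pos h]; nlinarith
        · rw [if_neg h]; nlinarith
      have hps : ∑ v, p v = 1 := by
        simp only [hp, Finset.sum_add_distrib, ← Finset.mul_sum, hds, hαsum,
          mul_zero, add_zero]
      have hpc : ∑ v, p v * c v = Lα + lam * (c u0 - Lα) := by
        simp only [hp, add_mul, Finset.sum_add_distrib, mul_assoc, ← Finset.mul_sum, hdc]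
        rw [hLα]
      have hchi : klDiv p α ≤ lam^2 * C := by
        have h1 := klDiv_le_chi p α hp0 hα
        have h2 : ∑ v, (p v)^2 / α v = 1 + lam^2 * C := by
          have hterm : ∀ v, (p v)^2 / α v
              = α v + 2*lam*(d v) + lam^2 * ((d v)^2 / α v) := by
            intro v
            have hv := (hα v).ne'
            simp only [hp]
            field_simp
            ring
          simp only [hterm, Finset.sum_add_distrib, ← Finset.mul_sum, hds, hαsum,
            mul_zero, add_zero, hC]
        rw [hps, h2] at h1
        linarith
      have hklT : 0 ≤ klDiv (kernelAct T p) (kernelAct T α) := by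
        refine klDiv_nonneg' _ _ (kernelAct_nonneg T p hT hp0)
          (kernelAct_nonneg T α hT fun u => (hα u).le) ?_ ?_
          (kernelAct_zero T α p hT hα)
        · rw [kernelAct_sum T p hTsum, hps]
        · rw [kernelAct_sum T α hTsum, hαsum]
      have hmin := hαmin p hp0 hps
      rw [hσα, hid p, hpc] at hmin
      nlinarith
    by_contra hcon
    push_neg at hcon
    have hε0 : 0 < Lα - c u0 := by linarith
    set lam : ℝ := min (1/2) ((Lα - c u0) / (C + 1)) with hlam
    have hl0 : 0 < lam := lt_min (by norm_num) (by positivity)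
    have hl1 : lam < 1 := lt_of_le_of_lt (min_le_left _ _) (by norm_num)
    have h := hstep lam hl0 hl1
    have hlC : lam * C < Lα - c u0 := by
      have h1 : lam ≤ (Lα - c u0) / (C + 1) := min_le_right _ _
      have h2 : lam * C ≤ (Lα - c u0) / (C + 1) * C :=
        mul_le_mul_of_nonneg_right h1 hC0
      have h3 : (Lα - c u0) / (C + 1) * C < Lα - c u0 := by
        rw [div_mul_eq_mul_div, div_lt_iff₀ (by linarith)]
        nlinarith
      linarith
    linarith
  have hceq : ∀ u, c u = Lα := by
    have hsum0 : ∑ u, α u * (c u - Lα) = 0 := by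
      simp only [mul_sub, Finset.sum_sub_distrib, ← Finset.sum_mul, hαsum, one_mul]
      rw [← hLα]; ring
    intro u
    have h0 := (Finset.sum_eq_zero_iff_of_nonneg
      (fun v _ => mul_nonneg (hα v).le (by linarith [hkey v]))).mp hsum0 u
      (Finset.mem_univ u)
    have h1 := (mul_eq_zero.mp h0).resolve_left (hα u).ne'
    linarith
  have hβc : ∑ u, β u * c u = Lα := by
    simp only [hceq, ← Finset.sum_mul, hβsum, one_mul]
  constructor
  · rw [hid β, hσα, hβc]; ring
  · linarith [hαmin β hβ hβsum]
end

section
/- (Modified exchange fluctuation theorem) In the XFT setup, for every q ∈ ℝ, P₀({x : Q₁(x) = q}) = e^{q(β₁ − β₂) + β₂ W} · P₀({x : Q₁ʳᵉᵛ(x) = −q}); that is, the probability of forward trajectories transferring heat q into bath 1 equals e^{qΔβ + β₂W} times the probability of reverse trajectories transferring heat −q into bath 1. -/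
open scoped BigOperators

attribute [local instance] Classical.propDecidable

/-- (Modified exchange fluctuation theorem) In the XFT setup — two finite baths
with Boltzmann initial distributions at inverse temperatures β₁, β₂, a uniformly
distributed SOI, deterministic invertible joint dynamics F, and
trajectory-independent total work W — for every q ∈ ℝ the probability of forward
trajectories transferring heat q into bath 1 equals e^{q(β₁−β₂) + β₂W} times the
probability of reverse trajectories transferring heat −q into bath 1. -/
theorem modified_exchange_fluctuation_theorem
    {V₁ V₂ U : Type*} [Fintype V₁] [Fintype V₂] [Fintype U] [Nonempty U]
    (β₁ β₂ : ℝ) (B₁ : V₁ → ℝ) (B₂ : V₂ → ℝ)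
    (F : V₁ × V₂ × U ≃ V₁ × V₂ × U)
    (Z : ℝ)
    (hZ : Z = ∑ v₁ : V₁, ∑ v₂ : V₂, Real.exp (-(β₁ * B₁ v₁) - β₂ * B₂ v₂))
    (P0 : V₁ × V₂ × U → ℝ)
    (hP0 : ∀ x : V₁ × V₂ × U,
      P0 x = Real.exp (-(β₁ * B₁ x.1) - β₂ * B₂ x.2.1) / (Z * Fintype.card U))
    (Q₁ Q₂ Q₁rev : V₁ × V₂ × U → ℝ)
    (hQ₁ : ∀ x, Q₁ x = B₁ (F x).1 - B₁ x.1)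
    (hQ₂ : ∀ x, Q₂ x = B₂ (F x).2.1 - B₂ x.2.1)
    (hQ₁rev : ∀ x, Q₁rev x = B₁ (F.symm x).1 - B₁ x.1)
    (W : ℝ) (hW : ∀ x, Q₁ x + Q₂ x = W) :
    ∀ q : ℝ,
      ∑ x ∈ Finset.univ.filter (fun x : V₁ × V₂ × U => Q₁ x = q), P0 x =
        Real.exp (q * (β₁ - β₂) + β₂ * W) *
          ∑ x ∈ Finset.univ.filter (fun x : V₁ × V₂ × U => Q₁rev x = -q), P0 x := by
  intro q
  have key : ∀ x : V₁ × V₂ × U, Q₁ x = q →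
      P0 x = Real.exp (q * (β₁ - β₂) + β₂ * W) * P0 (F x) := by
    intro x hx
    have h1 : B₁ (F x).1 - B₁ x.1 = q := by rw [← hQ₁ x]; exact hx
    have h2 : B₂ (F x).2.1 - B₂ x.2.1 = W - q := by
      rw [← hQ₂ x]; have := hW x; linarith
    rw [hP0, hP0, mul_div_assoc', ← Real.exp_add]
    congr 1
    rw [Real.exp_eq_exp]
    linear_combination β₁ * h1 + β₂ * h2
  have hbij : ∑ x ∈ Finset.univ.filter (fun x : V₁ × V₂ × U => Q₁ x = q), P0 (F x)
      = ∑ x ∈ Finset.univ.filter (fun x : V₁ × V₂ × U => Q₁rev x = -q), P0 x := by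
    apply Finset.sum_bij (fun x _ => F x)
    · intro a ha
      simp only [Finset.mem_filter, Finset.mem_univ, true_and] at ha ⊢
      rw [hQ₁rev, Equiv.symm_apply_apply]
      rw [hQ₁ a] at ha; linarith
    · intro a _ b _ h; exact F.injective h
    · intro b hb
      simp only [Finset.mem_filter, Finset.mem_univ, true_and] at hb ⊢
      refine ⟨F.symm b, ?_, (F.apply_symm_apply b)⟩
      rw [hQ₁ (F.symm b), Equiv.apply_symm_apply]
      rw [hQ₁rev b] at hb; linarith
    · intro a _; rfl
  calc ∑ x ∈ Finset.univ.filter (fun x : V₁ × V₂ × U => Q₁ x = q), P0 x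
      = ∑ x ∈ Finset.univ.filter (fun x : V₁ × V₂ × U => Q₁ x = q),
          Real.exp (q * (β₁ - β₂) + β₂ * W) * P0 (F x) := by
        apply Finset.sum_congr rfl
        intro x hx
        exact key x (Finset.mem_filter.mp hx).2
    _ = Real.exp (q * (β₁ - β₂) + β₂ * W) *
          ∑ x ∈ Finset.univ.filter (fun x : V₁ × V₂ × U => Q₁ x = q), P0 (F x) := by
        rw [Finset.mul_sum]
    _ = _ := by rw [hbij]
end

section
/- (Legal triples and invertibility of the full dynamics) Fix a DFA with state set S, alphabet Σ, transition function f : S × Σ → S and start state q₀, fix τ ∈ ℕ, and let words be functions ω : {0,…,τ} → Σ. Define legal triples inductively: (q₀, 0, ω) is legal for every ω, and if (s, z, ω) is legal with z < τ then (f(s, ω[z]), z+1, ω) is legal. Then: (i) for every word ω and every 0 ≤ z ≤ τ there is exactly one state s such that (s, z, ω) is legal, namely the state reached from q₀ by reading ω[0], …, ω[z−1]; and (ii) the map Φ defined on legal triples by Φ(s, z, ω) := (f(s, ω[z]), z+1, ω) for z < τ and Φ(s, τ, ω) := (q₀, 0, ω) is a bijection of the set of legal triples onto itself, so the DFA's (generally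 non-invertible) update function is implemented by a deterministic invertible dynamics on the set of legal triples. -/
/-- The state reached from the start state `q0` after reading the first `z`
symbols `ω[0], …, ω[z−1]` of the word `ω : Fin (τ+1) → A`. -/
def dfaRun {S A : Type*} (f : S → A → S) (q0 : S) {τ : ℕ}
    (ω : Fin (τ + 1) → A) : ℕ → S
  | 0 => q0
  | z + 1 =>
    if h : z < τ + 1 then f (dfaRun f q0 ω z) (ω ⟨z, h⟩) else dfaRun f q0 ω z

/-- Legal triples: `(q₀, 0, ω)` is legal for every word `ω`, and if `(s, z, ω)`
is legal with `z < τ` then `(f(s, ω[z]), z+1, ω)` is legal. -/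
inductive Legal {S A : Type*} (f : S → A → S) (q0 : S) (τ : ℕ) :
    S → Fin (τ + 1) → (Fin (τ + 1) → A) → Prop
  | base (ω : Fin (τ + 1) → A) : Legal f q0 τ q0 0 ω
  | step {s : S} {z : Fin (τ + 1)} {ω : Fin (τ + 1) → A}
      (h : (z : ℕ) < τ) (hl : Legal f q0 τ s z ω) :
      Legal f q0 τ (f s (ω z)) ⟨(z : ℕ) + 1, by omega⟩ ω

/-- The full-system dynamics `Φ`: on a triple `(s, z, ω)` with `z < τ` it acts
as `(s, z, ω) ↦ (f(s, ω[z]), z+1, ω)`, and it sends `(s, τ, ω)` to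
`(q₀, 0, ω)`. -/
def Phi {S A : Type*} (f : S → A → S) (q0 : S) (τ : ℕ) :
    S × Fin (τ + 1) × (Fin (τ + 1) → A) → S × Fin (τ + 1) × (Fin (τ + 1) → A) :=
  fun p =>
    if h : (p.2.1 : ℕ) < τ then
      (f p.1 (p.2.2 p.2.1), ⟨(p.2.1 : ℕ) + 1, by omega⟩, p.2.2)
    else (q0, 0, p.2.2)

lemma legal_iff {S A : Type*} (f : S → A → S) (q0 : S) (τ : ℕ)
    (ω : Fin (τ + 1) → A) (z : Fin (τ + 1)) (s : S) :
    Legal f q0 τ s z ω ↔ s = dfaRun f q0 ω (z : ℕ) := by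
  constructor
  · intro h
    induction h with
    | base ω => rfl
    | step h hl ih =>
      simp only [dfaRun]
      rw [dif_pos (by omega), ih]
  · rintro rfl
    obtain ⟨n, hn⟩ := z
    induction n with
    | zero => exact Legal.base ω
    | succ m ih =>
      have hm : m < τ := by omega
      have := Legal.step (f := f) (q0 := q0) (s := dfaRun f q0 ω m)
        (z := ⟨m, by omega⟩) (ω := ω) hm (ih (by omega))
      simpa [dfaRun, dif_pos (show m < τ + 1 by omega), dif_pos (show m ≤ τ by omega)] using this

/-- (Legal triples and invertibility of the full dynamics)
(i) For every word ω and every pointer z there is exactly one state s with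
(s, z, ω) legal, namely the state reached from q₀ by reading ω[0], …, ω[z−1];
(ii) Φ maps the set of legal triples bijectively onto itself, so the DFA's
(generally non-invertible) update function is implemented by a deterministic
invertible dynamics on the set of legal triples. -/
theorem legal_unique_and_phi_bijOn

    {S A : Type*} (f : S → A → S) (q0 : S) (τ : ℕ) :
    (∀ (ω : Fin (τ + 1) → A) (z : Fin (τ + 1)) (s : S),
      Legal f q0 τ s z ω ↔ s = dfaRun f q0 ω (z : ℕ)) ∧
    Set.BijOn (Phi f q0 τ)
      {p : S × Fin (τ + 1) × (Fin (τ + 1) → A) | Legal f q0 τ p.1 p.2.1 p.2.2}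
      {p : S × Fin (τ + 1) × (Fin (τ + 1) → A) | Legal f q0 τ p.1 p.2.1 p.2.2} := by
  refine ⟨legal_iff f q0 τ, ?_, ?_, ?_⟩
  · rintro ⟨s, z, ω⟩ hp
    simp only [Set.mem_setOf_eq] at hp ⊢
    unfold Phi
    by_cases h : (z : ℕ) < τ
    · simpa [h] using Legal.step h hp
    · simpa [h] using Legal.base ω
  · rintro ⟨s, z, ω⟩ hp ⟨s', z', ω'⟩ hq heq
    simp only [Set.mem_setOf_eq] at hp hq
    unfold Phi at heq
    by_cases h : (z : ℕ) < τ <;> by_cases h' : (z' : ℕ) < τ <;>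
      simp only [h, h', dif_pos, dif_neg, not_false_iff, Prod.mk.injEq] at heq
    · obtain ⟨_, hz, hω⟩ := heq
      subst hω
      have hzz : z = z' := by
        have := congrArg Fin.val hz; simp at this; omega
      subst hzz
      have := (legal_iff f q0 τ ω z s).mp hp
      have := (legal_iff f q0 τ ω z s').mp hq
      simp_all
    · exfalso; have := congrArg Fin.val heq.2.1; simp at this
    · exfalso; have := congrArg Fin.val heq.2.1; simp at this
    · have hω := heq.2.2
      subst hω
      have hz : (z : ℕ) = τ := by omega
      have hz' : (z' : ℕ) = τ := by omega
      have hzz : z = z' := by ext; omega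
      subst hzz
      have h1 := (legal_iff f q0 τ ω z s).mp hp
      have h2 := (legal_iff f q0 τ ω z s').mp hq
      simp_all
  · rintro ⟨s, z, ω⟩ hq
    simp only [Set.mem_setOf_eq] at hq
    obtain ⟨n, hn⟩ := z
    cases n with
    | zero =>
      refine ⟨(dfaRun f q0 ω τ, ⟨τ, by omega⟩, ω), ?_, ?_⟩
      · exact (legal_iff f q0 τ ω ⟨τ, by omega⟩ _).mpr rfl
      · have hs : s = q0 := by
          have := (legal_iff f q0 τ ω ⟨0, hn⟩ s).mp hq; simpa [dfaRun] using this
        unfold Phi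
        simp [hs]
    | succ m =>
      have hm : m < τ := by omega
      refine ⟨(dfaRun f q0 ω m, ⟨m, by omega⟩, ω), ?_, ?_⟩
      · exact (legal_iff f q0 τ ω ⟨m, by omega⟩ _).mpr rfl
      · have hs : s = dfaRun f q0 ω (m + 1) :=
          (legal_iff f q0 τ ω ⟨m + 1, hn⟩ s).mp hq
        unfold Phi
        simp only [dif_pos hm]
        simp [hs, dfaRun, dif_pos (show m < τ + 1 by omega), dif_pos (show m ≤ τ by omega)]
end
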